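/- Let G be the discrete Heisenberg group ⟨a,b,c | [a,b]=c, [a,c]=[b,c]=1⟩. Then for every d ≥ 6, G_bound(d) is trivial; consequently G_bound is trivial: for every nonidentity g ∈ G and every constant M > 0 there exists a finite symmetric generating set S of G of cardinality at most 6 with l_S(g) > M. -/

import Mathlib

/-- A finite symmetric generating set of a group. -/
def IsSymmGen {G : Type*} [Group G] (S : Finset G) : Prop :=
  (∀ s ∈ S, s⁻¹ ∈ S) ∧ Subgroup.closure (S : Set G) = ⊤

/-- The word length of `g` with respect to `S`: the least `n` such that
`g` is a product of `n` elements of `S`. -/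
noncomputable def wordLen {G : Type*} [Group G] (S : Finset G) (g : G) : ℕ :=
  sInf {n : ℕ | ∃ w : List G, (∀ s ∈ w, s ∈ S) ∧ w.length = n ∧ w.prod = g}

/-- Elements of uniformly bounded word length. -/
def GBound (G : Type*) [Group G] : Set G :=
  {g | ∃ M : ℕ, 0 < M ∧ ∀ S : Finset G, IsSymmGen S → wordLen S g ≤ M}

/-- Elements of uniformly bounded word length over symmetric generating sets of
cardinality at most `d`. -/
def GBoundD (G : Type*) [Group G] (d : ℕ) : Set G :=
  {g | ∃ M : ℕ, 0 < M ∧ ∀ S : Finset G, IsSymmGen S → S.card ≤ d →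
    wordLen S g ≤ M}

/-- Relations of the Heisenberg group `⟨a,b,c | [a,b] = c, [a,c] = [b,c] = 1⟩`.
Here `0, 1, 2` stand for `a, b, c`. -/
def heisenbergRels : Set (FreeGroup (Fin 3)) :=
  { FreeGroup.of 0 * FreeGroup.of 1 * (FreeGroup.of 0)⁻¹ * (FreeGroup.of 1)⁻¹ *
      (FreeGroup.of 2)⁻¹,
    FreeGroup.of 0 * FreeGroup.of 2 * (FreeGroup.of 0)⁻¹ * (FreeGroup.of 2)⁻¹,
    FreeGroup.of 1 * FreeGroup.of 2 * (FreeGroup.of 1)⁻¹ * (FreeGroup.of 2)⁻¹ }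

/-- The discrete Heisenberg group. -/
abbrev Heisenberg : Type := PresentedGroup heisenbergRels


-- ## Auxiliary development

/-- Model of the Heisenberg group. -/
@[ext] structure H3 where
  x : ℤ
  y : ℤ
  z : ℤ
deriving DecidableEq

namespace H3

instance : Mul H3 := ⟨fun a b => ⟨a.x + b.x, a.y + b.y, a.z + b.z + a.x * b.y⟩⟩
instance : One H3 := ⟨⟨0, 0, 0⟩⟩
instance : Inv H3 := ⟨fun a => ⟨-a.x, -a.y, a.x * a.y - a.z⟩⟩

@[simp] lemma mul_def (a b : H3) :
    a * b = ⟨a.x + b.x, a.y + b.y, a.z + b.z + a.x * b.y⟩ := rfl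
@[simp] lemma one_def : (1 : H3) = ⟨0, 0, 0⟩ := rfl
@[simp] lemma inv_def (a : H3) : a⁻¹ = ⟨-a.x, -a.y, a.x * a.y - a.z⟩ := rfl

instance : Group H3 where
  mul_assoc a b c := by ext <;> simp <;> ring
  one_mul a := by ext <;> simp
  mul_one a := by ext <;> simp
  inv_mul_cancel a := by ext <;> simp

/-- The homomorphism `ℤ² → H3` onto the elements with `x = 0`. -/
def θ : Multiplicative (ℤ × ℤ) →* H3 where
  toFun p := ⟨0, (Multiplicative.toAdd p).1, (Multiplicative.toAdd p).2⟩
  map_one' := by ext <;> simp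
  map_mul' a b := by ext <;> simp

lemma yz_zpow (y z k : ℤ) : (⟨0, y, z⟩ : H3) ^ k = ⟨0, k * y, k * z⟩ := by
  have : (⟨0, y, z⟩ : H3) = θ (Multiplicative.ofAdd (y, z)) := rfl
  rw [this, ← map_zpow, ← ofAdd_zsmul]
  simp [θ]

/-- The homomorphism `ℤ → H3` onto the elements with `y = z = 0`. -/
def θa : Multiplicative ℤ →* H3 where
  toFun p := ⟨Multiplicative.toAdd p, 0, 0⟩
  map_one' := by ext <;> simp
  map_mul' a b := by ext <;> simp

lemma x_zpow (x k : ℤ) : (⟨x, 0, 0⟩ : H3) ^ k = ⟨k * x, 0, 0⟩ := by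
  have : (⟨x, 0, 0⟩ : H3) = θa (Multiplicative.ofAdd x) := rfl
  rw [this, ← map_zpow, ← ofAdd_zsmul]
  simp [θa, mul_comm]

/-- The flip automorphism of `H3`. -/
def φ : H3 ≃* H3 where
  toFun a := ⟨a.y, a.x, a.x * a.y - a.z⟩
  invFun a := ⟨a.y, a.x, a.x * a.y - a.z⟩
  left_inv a := by ext <;> simp [mul_comm]
  right_inv a := by ext <;> simp [mul_comm]
  map_mul' a b := by ext <;> simp <;> ring

end H3

/-- The generating set `{a, b^N, a b^{N²+1}}^{±1}`. -/
def SN (N : ℤ) : Finset H3 :=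
  {⟨1,0,0⟩, ⟨0,N,0⟩, ⟨1,N^2+1,0⟩, ⟨-1,0,0⟩, ⟨0,-N,0⟩, ⟨-1,-(N^2+1),N^2+1⟩}

lemma SN_card (N : ℤ) : (SN N).card ≤ 6 := by
  apply le_trans (Finset.card_insert_le _ _)
  apply Nat.succ_le_succ
  apply le_trans (Finset.card_insert_le _ _)
  apply Nat.succ_le_succ
  apply le_trans (Finset.card_insert_le _ _)
  apply Nat.succ_le_succ
  apply le_trans (Finset.card_insert_le _ _)
  apply Nat.succ_le_succ
  apply le_trans (Finset.card_insert_le _ _)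
  apply Nat.succ_le_succ
  exact Finset.card_singleton _ |>.le

lemma SN_symm (N : ℤ) : ∀ s ∈ SN N, s⁻¹ ∈ SN N := by
  intro s hs
  simp only [SN, Finset.mem_insert, Finset.mem_singleton] at hs ⊢
  rcases hs with rfl|rfl|rfl|rfl|rfl|rfl
  · refine Or.inr (Or.inr (Or.inr (Or.inl ?_))); ext <;> simp
  · refine Or.inr (Or.inr (Or.inr (Or.inr (Or.inl ?_)))); ext <;> simp
  · refine Or.inr (Or.inr (Or.inr (Or.inr (Or.inr ?_)))); ext <;> simp
  · refine Or.inl ?_; ext <;> simp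
  · refine Or.inr (Or.inl ?_); ext <;> simp
  · refine Or.inr (Or.inr (Or.inl ?_)); ext <;> simp <;> ring

lemma SN_gen (N : ℤ) : Subgroup.closure ((SN N : Finset H3) : Set H3) = ⊤ := by
  rw [Subgroup.eq_top_iff']
  intro g
  set K := Subgroup.closure ((SN N : Finset H3) : Set H3) with hK
  have hv1 : (⟨1,0,0⟩ : H3) ∈ K := Subgroup.subset_closure (by simp [SN])
  have hv2 : (⟨0,N,0⟩ : H3) ∈ K := Subgroup.subset_closure (by simp [SN])
  have hv3 : (⟨1,N^2+1,0⟩ : H3) ∈ K := Subgroup.subset_closure (by simp [SN])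
  have hcN : (⟨0,0,N⟩ : H3) ∈ K := by
    have : (⟨0,0,N⟩ : H3) = ⟨1,0,0⟩ * ⟨0,N,0⟩ * (⟨1,0,0⟩ : H3)⁻¹ * (⟨0,N,0⟩ : H3)⁻¹ := by
      ext <;> simp
    rw [this]
    exact mul_mem (mul_mem (mul_mem hv1 hv2) (inv_mem hv1)) (inv_mem hv2)
  have hcN2 : (⟨0,0,N^2+1⟩ : H3) ∈ K := by
    have : (⟨0,0,N^2+1⟩ : H3) = ⟨1,0,0⟩ * ⟨1,N^2+1,0⟩ * (⟨1,0,0⟩ : H3)⁻¹ *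
        (⟨1,N^2+1,0⟩ : H3)⁻¹ := by
      ext <;> simp <;> ring
    rw [this]
    exact mul_mem (mul_mem (mul_mem hv1 hv3) (inv_mem hv1)) (inv_mem hv3)
  have hc : (⟨0,0,1⟩ : H3) ∈ K := by
    have : (⟨0,0,1⟩ : H3) = ⟨0,0,N^2+1⟩ * (⟨0,0,N⟩ : H3) ^ (-N) := by
      rw [H3.yz_zpow]; ext <;> simp <;> ring
    rw [this]
    exact mul_mem hcN2 (zpow_mem hcN _)
  have hbN2 : (⟨0,N^2+1,0⟩ : H3) ∈ K := by
    have : (⟨0,N^2+1,0⟩ : H3) = (⟨1,0,0⟩ : H3)⁻¹ * ⟨1,N^2+1,0⟩ * (⟨0,0,1⟩ : H3) ^ (N^2+1) := by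
      rw [H3.yz_zpow]; ext <;> simp <;> ring
    rw [this]
    exact mul_mem (mul_mem (inv_mem hv1) hv3) (zpow_mem hc _)
  have hb : (⟨0,1,0⟩ : H3) ∈ K := by
    have : (⟨0,1,0⟩ : H3) = ⟨0,N^2+1,0⟩ * (⟨0,N,0⟩ : H3) ^ (-N) := by
      rw [H3.yz_zpow]; ext <;> simp <;> ring
    rw [this]
    exact mul_mem hbN2 (zpow_mem hv2 _)
  have : g = (⟨1,0,0⟩ : H3) ^ g.x * (⟨0,1,0⟩ : H3) ^ g.y * (⟨0,0,1⟩ : H3) ^ (g.z - g.x * g.y) := by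
    rw [H3.x_zpow, H3.yz_zpow, H3.yz_zpow]; ext <;> simp <;> ring
  rw [this]
  exact mul_mem (mul_mem (zpow_mem hv1 _) (zpow_mem hb _)) (zpow_mem hc _)


lemma abs_lin {v m d L : ℤ} (hv : v = m + d) (hm : |m| ≤ L) (hd : |d| ≤ 1) :
    |v| ≤ L + 1 := by
  subst hv; exact (abs_add_le _ _).trans (add_le_add hm hd)

lemma abs_quad {v u m d L : ℤ} (hv : v = u + m + d) (hu : |u| ≤ L^2) (hm : |m| ≤ L)
    (hd : |d| ≤ 1) (hL : 0 ≤ L) : |v| ≤ (L+1)^2 := by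
  subst hv
  have h1 := abs_add_le (u + m) d
  have h2 := abs_add_le u m
  nlinarith [abs_nonneg u, abs_nonneg m]

/-- The key counting invariant for words over `SN N`. -/
lemma invariant (N : ℤ) : ∀ l : List H3, (∀ v ∈ l, v ∈ SN N) →
    ∃ m1 m2 m3 u w : ℤ,
      l.prod.x = m1 + m3 ∧ l.prod.y = N * m2 + (N^2+1) * m3 ∧
      l.prod.z = u * (N^2+1) + w * N ∧
      |m1| ≤ (l.length : ℤ) ∧ |m2| ≤ (l.length : ℤ) ∧ |m3| ≤ (l.length : ℤ) ∧
      |u| ≤ (l.length : ℤ)^2 ∧ |w| ≤ (l.length : ℤ)^2 := by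
  intro l
  induction l with
  | nil => intro _; exact ⟨0,0,0,0,0, by simp⟩
  | cons v t ih =>
    intro hmem
    obtain ⟨m1, m2, m3, u, w, hx, hy, hz, h1, h2, h3, hu, hw⟩ :=
      ih (fun s hs => hmem s (List.mem_cons_of_mem _ hs))
    have hv := hmem v List.mem_cons_self
    have hL : (0:ℤ) ≤ (t.length : ℤ) := Int.ofNat_nonneg _
    have h0 : |(0:ℤ)| ≤ (t.length : ℤ) := by simpa using hL
    simp only [SN, Finset.mem_insert, Finset.mem_singleton] at hv
    have hlen : ((v :: t).length : ℤ) = (t.length : ℤ) + 1 := by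
      push_cast [List.length_cons]; ring
    rw [List.prod_cons]
    rcases hv with rfl|rfl|rfl|rfl|rfl|rfl
    · refine ⟨m1+1, m2, m3, u+m3, w+m2, ?_, ?_, ?_, ?_, ?_, ?_, ?_, ?_⟩
      · simp only [H3.mul_def]; rw [hx]; ring
      · simp only [H3.mul_def]; rw [hy]; ring
      · simp only [H3.mul_def]; rw [hz, hy]; ring
      · rw [hlen]; exact abs_lin (d := 1) (by ring) h1 (by norm_num)
      · rw [hlen]; exact abs_lin (d := 0) (by ring) h2 (by norm_num)
      · rw [hlen]; exact abs_lin (d := 0) (by ring) h3 (by norm_num)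
      · rw [hlen]; exact abs_quad (d := 0) (by ring) hu h3 (by norm_num) hL
      · rw [hlen]; exact abs_quad (d := 0) (by ring) hw h2 (by norm_num) hL
    · refine ⟨m1, m2+1, m3, u, w, ?_, ?_, ?_, ?_, ?_, ?_, ?_, ?_⟩
      · simp only [H3.mul_def]; rw [hx]; ring
      · simp only [H3.mul_def]; rw [hy]; ring
      · simp only [H3.mul_def]; rw [hz, hy]; ring
      · rw [hlen]; exact abs_lin (d := 0) (by ring) h1 (by norm_num)
      · rw [hlen]; exact abs_lin (d := 1) (by ring) h2 (by norm_num)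
      · rw [hlen]; exact abs_lin (d := 0) (by ring) h3 (by norm_num)
      · rw [hlen]; exact abs_quad (d := 0) (by ring) hu h0 (by norm_num) hL
      · rw [hlen]; exact abs_quad (d := 0) (by ring) hw h0 (by norm_num) hL
    · refine ⟨m1, m2, m3+1, u+m3, w+m2, ?_, ?_, ?_, ?_, ?_, ?_, ?_, ?_⟩
      · simp only [H3.mul_def]; rw [hx]; ring
      · simp only [H3.mul_def]; rw [hy]; ring
      · simp only [H3.mul_def]; rw [hz, hy]; ring
      · rw [hlen]; exact abs_lin (d := 0) (by ring) h1 (by norm_num)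
      · rw [hlen]; exact abs_lin (d := 0) (by ring) h2 (by norm_num)
      · rw [hlen]; exact abs_lin (d := 1) (by ring) h3 (by norm_num)
      · rw [hlen]; exact abs_quad (d := 0) (by ring) hu h3 (by norm_num) hL
      · rw [hlen]; exact abs_quad (d := 0) (by ring) hw h2 (by norm_num) hL
    · refine ⟨m1-1, m2, m3, u-m3, w-m2, ?_, ?_, ?_, ?_, ?_, ?_, ?_, ?_⟩
      · simp only [H3.mul_def]; rw [hx]; ring
      · simp only [H3.mul_def]; rw [hy]; ring
      · simp only [H3.mul_def]; rw [hz, hy]; ring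
      · rw [hlen]; exact abs_lin (d := -1) (by ring) h1 (by norm_num)
      · rw [hlen]; exact abs_lin (d := 0) (by ring) h2 (by norm_num)
      · rw [hlen]; exact abs_lin (d := 0) (by ring) h3 (by norm_num)
      · rw [hlen]; exact abs_quad (d := 0) (by ring) hu (abs_neg m3 ▸ h3) (by norm_num) hL
      · rw [hlen]; exact abs_quad (d := 0) (by ring) hw (abs_neg m2 ▸ h2) (by norm_num) hL
    · refine ⟨m1, m2-1, m3, u, w, ?_, ?_, ?_, ?_, ?_, ?_, ?_, ?_⟩
      · simp only [H3.mul_def]; rw [hx]; ring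
      · simp only [H3.mul_def]; rw [hy]; ring
      · simp only [H3.mul_def]; rw [hz, hy]; ring
      · rw [hlen]; exact abs_lin (d := 0) (by ring) h1 (by norm_num)
      · rw [hlen]; exact abs_lin (d := -1) (by ring) h2 (by norm_num)
      · rw [hlen]; exact abs_lin (d := 0) (by ring) h3 (by norm_num)
      · rw [hlen]; exact abs_quad (d := 0) (by ring) hu h0 (by norm_num) hL
      · rw [hlen]; exact abs_quad (d := 0) (by ring) hw h0 (by norm_num) hL
    · refine ⟨m1, m2, m3-1, u-m3+1, w-m2, ?_, ?_, ?_, ?_, ?_, ?_, ?_, ?_⟩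
      · simp only [H3.mul_def]; rw [hx]; ring
      · simp only [H3.mul_def]; rw [hy]; ring
      · simp only [H3.mul_def]; rw [hz, hy]; ring
      · rw [hlen]; exact abs_lin (d := 0) (by ring) h1 (by norm_num)
      · rw [hlen]; exact abs_lin (d := 0) (by ring) h2 (by norm_num)
      · rw [hlen]; exact abs_lin (d := -1) (by ring) h3 (by norm_num)
      · rw [hlen]; exact abs_quad (d := 1) (by ring) hu (abs_neg m3 ▸ h3) (by norm_num) hL
      · rw [hlen]; exact abs_quad (d := 0) (by ring) hw (abs_neg m2 ▸ h2) (by norm_num) hL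

lemma key (N : ℤ) (g : H3) (M : ℕ)
    (hN1 : (M:ℤ) + |g.y| < N) (hN2 : (M:ℤ)^2 + |g.z| < N)
    (hg : g.y ≠ 0 ∨ g.z ≠ 0) :
    ∀ l : List H3, (∀ v ∈ l, v ∈ SN N) → l.prod = g → M < l.length := by
  intro l hmem hprod
  by_contra hle
  push_neg at hle
  have hlen : (l.length : ℤ) ≤ (M : ℤ) := by exact_mod_cast hle
  have hL : (0:ℤ) ≤ (l.length : ℤ) := Int.ofNat_nonneg _
  have hM : (0:ℤ) ≤ (M:ℤ) := Int.ofNat_nonneg _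
  obtain ⟨m1, m2, m3, u, w, hx, hy, hz, h1, h2, h3, hu, hw⟩ := invariant N l hmem
  rw [hprod] at hx hy hz
  have hN0 : (0:ℤ) < N := lt_of_le_of_lt (by positivity) hN2
  rcases hg with hgy | hgz
  · -- case g.y ≠ 0 : derive m3 = g.y, then m2 = -N * g.y, too big
    have hdvd : N ∣ (g.y - m3) := ⟨m2 + N * m3, by rw [hy]; ring⟩
    have habs : |g.y - m3| < N := by
      calc |g.y - m3| ≤ |g.y| + |m3| := abs_sub _ _
        _ ≤ |g.y| + (M:ℤ) := by linarith [h3.trans hlen]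
        _ < N := by linarith
    have hm3 : m3 = g.y := by
      have := Int.eq_zero_of_abs_lt_dvd hdvd habs
      omega
    have hm2 : m2 = -N * g.y := by
      have : N * m2 = N * (-N * g.y) := by rw [hm3] at hy; linarith [hy]
      exact mul_left_cancel₀ (ne_of_gt hN0) this
    have h1y : (1:ℤ) ≤ |g.y| := Int.one_le_abs (by exact_mod_cast hgy)
    have : |m2| = N * |g.y| := by rw [hm2, abs_mul, abs_neg, abs_of_pos hN0]
    have : N ≤ |m2| := by nlinarith
    have : |m2| ≤ (M:ℤ) := h2.trans hlen
    linarith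
  · -- case g.z ≠ 0 : derive u = g.z, then w = -N * g.z, too big
    have hdvd : N ∣ (g.z - u) := ⟨u * N + w, by rw [hz]; ring⟩
    have hu' : |u| ≤ (M:ℤ)^2 := hu.trans (by nlinarith)
    have hw' : |w| ≤ (M:ℤ)^2 := hw.trans (by nlinarith)
    have habs : |g.z - u| < N := by
      calc |g.z - u| ≤ |g.z| + |u| := abs_sub _ _
        _ ≤ |g.z| + (M:ℤ)^2 := by linarith
        _ < N := by linarith
    have hueq : u = g.z := by
      have := Int.eq_zero_of_abs_lt_dvd hdvd habs
      omega
    have hweq : w = -N * g.z := by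
      have : N * w = N * (-N * g.z) := by rw [hueq] at hz; linarith [hz]
      exact mul_left_cancel₀ (ne_of_gt hN0) this
    have h1z : (1:ℤ) ≤ |g.z| := Int.one_le_abs (by exact_mod_cast hgz)
    have : |w| = N * |g.z| := by rw [hweq, abs_mul, abs_neg, abs_of_pos hN0]
    have : N ≤ |w| := by nlinarith
    linarith

namespace HW

def A : Heisenberg := PresentedGroup.of 0
def B : Heisenberg := PresentedGroup.of 1
def C : Heisenberg := PresentedGroup.of 2

lemma rel_one {r : FreeGroup (Fin 3)} (hr : r ∈ heisenbergRels) :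
    PresentedGroup.mk heisenbergRels r = 1 :=
  (QuotientGroup.eq_one_iff r).mpr (Subgroup.subset_normalClosure hr)

lemma mkof (i : Fin 3) :
    PresentedGroup.mk heisenbergRels (FreeGroup.of i) = PresentedGroup.of i := rfl

lemma hrel1 : A * B * A⁻¹ * B⁻¹ * C⁻¹ = 1 := by
  have h := rel_one (show _ ∈ heisenbergRels from Set.mem_insert _ _)
  simpa only [map_mul, map_inv, mkof, A, B, C] using h

lemma hrel2 : A * C * A⁻¹ * C⁻¹ = 1 := by
  have h := rel_one (show _ ∈ heisenbergRels from
    Set.mem_insert_of_mem _ (Set.mem_insert _ _))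
  simpa only [map_mul, map_inv, mkof, A, B, C] using h

lemma hrel3 : B * C * B⁻¹ * C⁻¹ = 1 := by
  have h := rel_one (show _ ∈ heisenbergRels from
    Set.mem_insert_of_mem _ (Set.mem_insert_of_mem _ rfl))
  simpa only [map_mul, map_inv, mkof, A, B, C] using h

lemma comm_of_rel {a c : Heisenberg} (h : a * c * a⁻¹ * c⁻¹ = 1) : c * a = a * c := by
  have h2 : (a * c) * (c * a)⁻¹ = a * c * a⁻¹ * c⁻¹ := by group
  rw [h] at h2
  exact (mul_inv_eq_one.mp h2).symm

lemma CA : C * A = A * C := comm_of_rel hrel2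
lemma CB : C * B = B * C := comm_of_rel hrel3

lemma central : ∀ g : Heisenberg, C * g = g * C := by
  intro g
  have hg : g ∈ Subgroup.centralizer {C} := by
    apply PresentedGroup.generated_by
    intro j
    rw [Subgroup.mem_centralizer_iff]
    intro h hh
    simp only [Set.mem_singleton_iff] at hh
    subst hh
    fin_cases j
    · exact CA
    · exact CB
    · rfl
  exact Subgroup.mem_centralizer_iff.mp hg C (Set.mem_singleton _)

lemma Ccomm (g : Heisenberg) : Commute C g := central g

lemma Czpow_comm (k : ℤ) (g : Heisenberg) : C ^ k * g = g * C ^ k :=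
  ((Ccomm g).zpow_left k).eq

lemma AB : A * B = C * B * A := by
  have k : A * B * A⁻¹ * B⁻¹ = C := mul_inv_eq_one.mp hrel1
  calc A * B = (A * B * A⁻¹ * B⁻¹) * B * A := by group
    _ = C * B * A := by rw [k]

lemma E2 : A⁻¹ * B * A = B * C⁻¹ := by
  have : A * (B * C⁻¹) * A⁻¹ = (A * B) * (C⁻¹ * A⁻¹) := by group
  rw [AB] at this
  have hAC : A * C⁻¹ = C⁻¹ * A := by
    have h := (Czpow_comm (-1) A).symm
    simpa [zpow_neg_one] using h
  have h2 : C * B * A * (C⁻¹ * A⁻¹) = B := by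
    calc C * B * A * (C⁻¹ * A⁻¹) = C * B * (A * C⁻¹) * A⁻¹ := by group
      _ = C * B * (C⁻¹ * A) * A⁻¹ := by rw [hAC]
      _ = (C * B) * C⁻¹ := by group
      _ = (B * C) * C⁻¹ := by rw [CB]
      _ = B := by group
  rw [h2] at this
  calc A⁻¹ * B * A = A⁻¹ * (A * (B * C⁻¹) * A⁻¹) * A := by rw [this]
    _ = B * C⁻¹ := by group

lemma E3 (y : ℤ) : A⁻¹ * B ^ y * A = B ^ y * C ^ (-y) := by
  have h : A⁻¹ * B ^ y * (A⁻¹)⁻¹ = (A⁻¹ * B * (A⁻¹)⁻¹) ^ y := by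
    rw [conj_zpow]
  rw [inv_inv] at h
  rw [h, E2]
  have : Commute B C⁻¹ := (Ccomm B).symm.inv_right
  rw [this.mul_zpow, inv_zpow, ← zpow_neg]

lemma E4 (y : ℤ) : B ^ y * A = A * B ^ y * C ^ (-y) := by
  calc B ^ y * A = A * (A⁻¹ * B ^ y * A) := by group
    _ = A * (B ^ y * C ^ (-y)) := by rw [E3]
    _ = A * B ^ y * C ^ (-y) := by group

lemma E5 (y : ℤ) : B ^ y * A * (B ^ y)⁻¹ = A * C ^ (-y) := by
  rw [E4]
  have : C ^ (-y) * (B ^ y)⁻¹ = (B ^ y)⁻¹ * C ^ (-y) :=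
    (((Ccomm B).zpow_zpow (-y) y).inv_right).eq
  calc A * B ^ y * C ^ (-y) * (B ^ y)⁻¹ = A * B ^ y * ((B ^ y)⁻¹ * C ^ (-y)) := by
        rw [← this]; group
    _ = A * C ^ (-y) := by group

/-- The main commutation rule: `B^y * A^x = A^x * B^y * C^(-(x*y))`. -/
lemma BA_main (y x : ℤ) : B ^ y * A ^ x = A ^ x * B ^ y * C ^ (-(x*y)) := by
  have h : B ^ y * A ^ x * (B ^ y)⁻¹ = (B ^ y * A * (B ^ y)⁻¹) ^ x := by
    rw [conj_zpow]
  rw [E5] at h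
  have hc : Commute A (C ^ (-y)) := (Ccomm A).symm.zpow_right (-y)
  rw [hc.mul_zpow] at h
  have h2 : (C ^ (-y)) ^ x = C ^ (-(x*y)) := by
    rw [← zpow_mul]; ring_nf
  rw [h2] at h
  calc B ^ y * A ^ x = B ^ y * A ^ x * (B ^ y)⁻¹ * B ^ y := by group
    _ = A ^ x * C ^ (-(x*y)) * B ^ y := by rw [h]
    _ = A ^ x * (C ^ (-(x*y)) * B ^ y) := by group
    _ = A ^ x * (B ^ y * C ^ (-(x*y))) := by rw [Czpow_comm]
    _ = A ^ x * B ^ y * C ^ (-(x*y)) := by group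

/-- Normal form multiplication. -/
lemma mulNF (x y z x' y' z' : ℤ) :
    (A ^ x * B ^ y * C ^ z) * (A ^ x' * B ^ y' * C ^ z') =
      A ^ (x + x') * B ^ (y + y') * C ^ (z + z' - x' * y) := by
  have h1 : C ^ z * A ^ x' = A ^ x' * C ^ z := Czpow_comm z (A ^ x')
  have h2 : B ^ y * A ^ x' = A ^ x' * B ^ y * C ^ (-(x'*y)) := BA_main y x'
  calc (A ^ x * B ^ y * C ^ z) * (A ^ x' * B ^ y' * C ^ z')
      = A ^ x * B ^ y * (C ^ z * A ^ x') * (B ^ y' * C ^ z') := by group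
    _ = A ^ x * B ^ y * (A ^ x' * C ^ z) * (B ^ y' * C ^ z') := by rw [h1]
    _ = A ^ x * (B ^ y * A ^ x') * (C ^ z * B ^ y') * C ^ z' := by group
    _ = A ^ x * (A ^ x' * B ^ y * C ^ (-(x'*y))) * (B ^ y' * C ^ z) * C ^ z' := by
        rw [h2, Czpow_comm z (B ^ y')]
    _ = (A ^ x * A ^ x') * B ^ y * (C ^ (-(x'*y)) * B ^ y') * (C ^ z * C ^ z') := by group
    _ = (A ^ x * A ^ x') * B ^ y * (B ^ y' * C ^ (-(x'*y))) * (C ^ z * C ^ z') := by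
        rw [Czpow_comm]
    _ = A ^ (x + x') * B ^ (y + y') * C ^ (z + z' - x' * y) := by
        have hC : C ^ (-(x'*y)) * (C ^ z * C ^ z') = C ^ (z + z' - x' * y) := by
          rw [← zpow_add, ← zpow_add]; ring_nf
        calc A ^ x * A ^ x' * B ^ y * (B ^ y' * C ^ (-(x'*y))) * (C ^ z * C ^ z')
            = (A ^ x * A ^ x') * ((B ^ y * B ^ y') *
                (C ^ (-(x'*y)) * (C ^ z * C ^ z'))) := by group
          _ = A ^ (x+x') * (B ^ (y+y') * C ^ (z + z' - x' * y)) := by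
              rw [← zpow_add, ← zpow_add, hC]
          _ = A ^ (x + x') * B ^ (y + y') * C ^ (z + z' - x' * y) := by group

/-- Every element of the Heisenberg group has a normal form. -/
lemma normal_form (g : Heisenberg) : ∃ x y z : ℤ, g = A ^ x * B ^ y * C ^ z := by
  let T : Subgroup Heisenberg :=
    { carrier := {g | ∃ x y z : ℤ, g = A ^ x * B ^ y * C ^ z}
      one_mem' := ⟨0, 0, 0, by simp⟩
      mul_mem' := by
        rintro p q ⟨x, y, z, rfl⟩ ⟨x', y', z', rfl⟩
        exact ⟨x + x', y + y', z + z' - x' * y, mulNF x y z x' y' z'⟩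
      inv_mem' := by
        rintro p ⟨x, y, z, rfl⟩
        refine ⟨-x, -y, -z - x * y, ?_⟩
        have h := mulNF x y z (-x) (-y) (-z - x * y)
        have h2 : A ^ (x + -x) * B ^ (y + -y) * C ^ (z + (-z - x*y) - -x * y) = 1 := by
          have e1 : x + -x = 0 := by ring
          have e2 : y + -y = 0 := by ring
          have e3 : z + (-z - x*y) - -x * y = 0 := by ring
          rw [e1, e2, e3]; simp
        rw [h2] at h
        exact inv_eq_of_mul_eq_one_right h }
  have : g ∈ T := PresentedGroup.generated_by heisenbergRels T (fun j => by
    fin_cases j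
    · refine ⟨1, 0, 0, ?_⟩; simp only [zpow_one, zpow_zero, mul_one, one_mul]; rfl
    · refine ⟨0, 1, 0, ?_⟩; simp only [zpow_one, zpow_zero, mul_one, one_mul]; rfl
    · refine ⟨0, 0, 1, ?_⟩; simp only [zpow_one, zpow_zero, mul_one, one_mul]; rfl) g
  exact this

/-- The canonical homomorphism to the model. -/
noncomputable def toH : Heisenberg →* H3 :=
  PresentedGroup.toGroup (f := fun i : Fin 3 =>
    if i = 0 then (⟨1,0,0⟩ : H3) else if i = 1 then ⟨0,1,0⟩ else ⟨0,0,1⟩)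
    (by
      intro r hr
      rcases hr with rfl | rfl | rfl <;>
        · simp only [map_mul, map_inv, FreeGroup.lift_apply_of]
          norm_num
          ext <;> simp)

lemma toH_A : toH A = ⟨1,0,0⟩ := by simp [toH, A, PresentedGroup.toGroup.of]
lemma toH_B : toH B = ⟨0,1,0⟩ := by simp [toH, B, PresentedGroup.toGroup.of]
lemma toH_C : toH C = ⟨0,0,1⟩ := by simp [toH, C, PresentedGroup.toGroup.of]

lemma toH_nf (x y z : ℤ) : toH (A ^ x * B ^ y * C ^ z) = ⟨x, y, z + x * y⟩ := by
  rw [map_mul, map_mul, map_zpow, map_zpow, map_zpow, toH_A, toH_B, toH_C,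
    H3.x_zpow, H3.yz_zpow, H3.yz_zpow]
  ext <;> simp <;> ring

lemma toH_injective : Function.Injective toH := by
  rw [injective_iff_map_eq_one]
  intro g hg
  obtain ⟨x, y, z, rfl⟩ := normal_form g
  rw [toH_nf] at hg
  have hx : x = 0 := congrArg H3.x hg
  have hy : y = 0 := congrArg H3.y hg
  have hz : z + x * y = 0 := congrArg H3.z hg
  have hz' : z = 0 := by rw [hx] at hz; simpa using hz
  rw [hx, hy, hz']; simp

lemma toH_surjective : Function.Surjective toH := by
  intro h
  exact ⟨A ^ h.x * B ^ h.y * C ^ (h.z - h.x * h.y), by rw [toH_nf]; ext <;> simp⟩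

/-- The isomorphism between the presented Heisenberg group and the model. -/
noncomputable def e : Heisenberg ≃* H3 :=
  MulEquiv.ofBijective toH ⟨toH_injective, toH_surjective⟩

lemma e_apply (g : Heisenberg) : e g = toH g := rfl


/-- Main construction: a generating set making `g` long, given a normalizing
automorphism `ψ`. -/
lemma build (g : Heisenberg) (ψ : H3 ≃* H3) (M : ℕ)
    (hcase : (ψ (toH g)).y ≠ 0 ∨ (ψ (toH g)).z ≠ 0) :
    ∃ S : Finset Heisenberg, IsSymmGen S ∧ S.card ≤ 6 ∧ M < wordLen S g := by
  classical
  set h : H3 := ψ (toH g) with hh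
  set N : ℤ := (M:ℤ)^2 + (M:ℤ) + |h.x| + |h.y| + |h.z| + 1 with hN
  have hM0 : (0:ℤ) ≤ (M:ℤ) := Int.ofNat_nonneg _
  have hN1 : (M:ℤ) + |h.y| < N := by
    have := abs_nonneg h.x
    have := abs_nonneg h.z
    nlinarith
  have hN2 : (M:ℤ)^2 + |h.z| < N := by
    have := abs_nonneg h.x
    have := abs_nonneg h.y
    nlinarith
  -- the backwards and forwards homomorphisms
  set F : H3 →* Heisenberg := ((ψ.symm).trans e.symm).toMonoidHom with hF
  set G : Heisenberg →* H3 := (e.trans ψ).toMonoidHom with hG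
  have hGF : ∀ v : H3, G (F v) = v := by
    intro v
    simp [hF, hG]
  have hFsurj : Function.Surjective F := ((ψ.symm).trans e.symm).surjective
  set S : Finset Heisenberg := (SN N).image F with hS
  have hsymm : ∀ s ∈ S, s⁻¹ ∈ S := by
    intro s hs
    rw [hS, Finset.mem_image] at hs ⊢
    obtain ⟨v, hv, rfl⟩ := hs
    exact ⟨v⁻¹, SN_symm N v hv, map_inv F v⟩
  have hgen : Subgroup.closure ((S : Finset Heisenberg) : Set Heisenberg) = ⊤ := by
    rw [hS, Finset.coe_image, ← MonoidHom.map_closure, SN_gen]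
    exact Subgroup.map_top_of_surjective F hFsurj
  refine ⟨S, ⟨hsymm, hgen⟩, Finset.card_image_le.trans (SN_card N), ?_⟩
  -- word length estimate
  have hne : {n : ℕ | ∃ w : List Heisenberg, (∀ s ∈ w, s ∈ S) ∧ w.length = n ∧
      w.prod = g}.Nonempty := by
    have hmem : g ∈ (Subgroup.closure ((S : Finset Heisenberg) : Set Heisenberg)) := by
      rw [hgen]; trivial
    have hmem2 : g ∈ Submonoid.closure (((S : Finset Heisenberg) : Set Heisenberg) ∪
        ((S : Finset Heisenberg) : Set Heisenberg)⁻¹) := by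
      rw [← Subgroup.closure_toSubmonoid]
      exact hmem
    obtain ⟨l, hl, hlp⟩ := Submonoid.exists_list_of_mem_closure hmem2
    refine ⟨l.length, l, ?_, rfl, hlp⟩
    intro s hs
    rcases hl s hs with h1 | h1
    · exact h1
    · have : s⁻¹ ∈ S := by simpa [Set.mem_inv] using h1
      simpa using hsymm _ this
  have hbig : ∀ n ∈ {n : ℕ | ∃ w : List Heisenberg, (∀ s ∈ w, s ∈ S) ∧ w.length = n ∧
      w.prod = g}, M < n := by
    rintro n ⟨w, hw, rfl, hprod⟩
    have hletters : ∀ v ∈ w.map G, v ∈ SN N := by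
      intro v hv
      rw [List.mem_map] at hv
      obtain ⟨s, hs, rfl⟩ := hv
      have := hw s hs
      rw [hS, Finset.mem_image] at this
      obtain ⟨v', hv', rfl⟩ := this
      rw [hGF]
      exact hv'
    have hprod2 : (w.map G).prod = h := by
      rw [List.prod_hom w G, hprod]
      simp [hG, hh, e_apply]
    have := key N h M hN1 hN2 hcase (w.map G) hletters hprod2
    simpa using this
  rw [wordLen]
  exact hbig _ (Nat.sInf_mem hne)

end HW

/-- In the Heisenberg group, `G_bound(d)` is trivial for every `d ≥ 6`, and
`G_bound` is trivial: every nontrivial element has unbounded word length over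
symmetric generating sets of cardinality at most `6`. -/
theorem stmt19 :
    (∀ d : ℕ, 6 ≤ d → GBoundD Heisenberg d = {1}) ∧
    GBound Heisenberg = {1} ∧
    (∀ g : Heisenberg, g ≠ 1 → ∀ M : ℕ, 0 < M →
      ∃ S : Finset Heisenberg, IsSymmGen S ∧ S.card ≤ 6 ∧ M < wordLen S g) := by
  classical
  have part3 : ∀ g : Heisenberg, g ≠ 1 → ∀ M : ℕ, 0 < M →
      ∃ S : Finset Heisenberg, IsSymmGen S ∧ S.card ≤ 6 ∧ M < wordLen S g := by
    intro g hg M _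
    by_cases hyz : (HW.toH g).y ≠ 0 ∨ (HW.toH g).z ≠ 0
    · refine HW.build g (MulEquiv.refl H3) M ?_
      simpa using hyz
    · push_neg at hyz
      obtain ⟨hy, hz⟩ := hyz
      have hx : (HW.toH g).x ≠ 0 := by
        intro hx0
        apply hg
        apply HW.toH_injective
        rw [map_one]
        ext
        · exact hx0
        · exact hy
        · exact hz
      refine HW.build g H3.φ M (Or.inl ?_)
      show (HW.toH g).x ≠ 0
      exact hx
  have hone : ∀ S : Finset Heisenberg, wordLen (G := Heisenberg) S 1 ≤ 1 := by
    intro S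
    have : (0 : ℕ) ∈ {n : ℕ | ∃ w : List Heisenberg, (∀ s ∈ w, s ∈ S) ∧ w.length = n ∧
        w.prod = 1} := ⟨[], by simp, by simp, by simp⟩
    exact (Nat.sInf_le this).trans (by norm_num)
  have hD : ∀ d : ℕ, 6 ≤ d → GBoundD Heisenberg d = {1} := by
    intro d hd
    ext g
    simp only [Set.mem_singleton_iff]
    constructor
    · rintro ⟨M, hM, hbound⟩
      by_contra hne
      obtain ⟨S, hS1, hS2, hS3⟩ := part3 g hne M hM
      have := hbound S hS1 (hS2.trans hd)
      omega
    · rintro rfl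
      exact ⟨1, one_pos, fun S _ _ => hone S⟩
  refine ⟨hD, ?_, part3⟩
  ext g
  simp only [Set.mem_singleton_iff]
  constructor
  · rintro ⟨M, hM, hbound⟩
    by_contra hne
    obtain ⟨S, hS1, hS2, hS3⟩ := part3 g hne M hM
    have := hbound S hS1
    omega
  · rintro rfl
    exact ⟨1, one_pos, fun S _ => hone S⟩
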